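/- (Lemma 4a of the Appendix.) In the channel model with a history-dependent deterministic encoder ψ, define the belief process (Π_0, H_0) := (uniform on 𝒲, w ↦ point mass at u₁) and (Π_t, H_t) := F(Π_{t-1}, H_{t-1}, φ^{Z_{1:t-1}}_t, Y_t). Then for every 1 ≤ t ≤ n, every w ∈ 𝒲 and every z_{1:t} ∈ 𝒵^t with P(W = w, Z_{1:t} = z_{1:t}) > 0, letting σ_t be the conditional law of (Π_{t-1}, H_{t-1}) given (W = w, Z_{1:t-1} = z_{1:t-1}) and u_t the memory determined by (w, z_{1:t-1}) via G², the conditional law of (Π_t, H_t) given (W = w, Z_{1:t} = z_{1:t}) equals G¹(σ_t, φ^{z_{1:t-1}}_t, z_t, u_t, w). -/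

import Mathlib

open scoped ENNReal Classical
open Finset

namespace NoisyFeedback

variable {W X Y Z U : Type*}

/-- Memory evolution: `mem G2 u1 φ w t zs` is the sender's memory after having
observed the feedback symbols `zs = z_{1:t}`. -/
def mem (G2 : U → (W × U → X) → Z → W → U) (u1 : U) (φ : ℕ → W × U → X) (w : W) :
    (t : ℕ) → (Fin t → Z) → U
  | 0, _ => u1
  | t + 1, zs => G2 (mem G2 u1 φ w t (Fin.init zs)) (φ t) (zs (Fin.last t)) w

variable [Fintype W] [Fintype X] [Fintype Y] [Fintype Z] [Fintype U]

/-- Joint pmf `P(W = w, Y_{1:t} = ys, Z_{1:t} = zs)` of the channel model with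
Markov encoders `φ`. -/
noncomputable def jointP (Qf : X → PMF Y) (Qb : Y → PMF Z)
    (G2 : U → (W × U → X) → Z → W → U) (u1 : U) (φ : ℕ → W × U → X)
    (t : ℕ) (w : W) (ys : Fin t → Y) (zs : Fin t → Z) : ℝ≥0∞ :=
  (Fintype.card W : ℝ≥0∞)⁻¹ *
    ∏ i : Fin t,
      Qf (φ i (w, mem G2 u1 φ w i (fun j => zs (Fin.castLE i.2.le j)))) (ys i) *
        Qb (ys i) (zs i)

/-- `P(Y_{1:t} = ys)`. -/
noncomputable def probY (Qf : X → PMF Y) (Qb : Y → PMF Z)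
    (G2 : U → (W × U → X) → Z → W → U) (u1 : U) (φ : ℕ → W × U → X)
    (t : ℕ) (ys : Fin t → Y) : ℝ≥0∞ :=
  ∑ w : W, ∑ zs : Fin t → Z, jointP Qf Qb G2 u1 φ t w ys zs

/-- `P(W = w, Y_{1:t} = ys)`. -/
noncomputable def probWY (Qf : X → PMF Y) (Qb : Y → PMF Z)
    (G2 : U → (W × U → X) → Z → W → U) (u1 : U) (φ : ℕ → W × U → X)
    (t : ℕ) (ys : Fin t → Y) (w : W) : ℝ≥0∞ :=
  ∑ zs : Fin t → Z, jointP Qf Qb G2 u1 φ t w ys zs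

/-- `P(W = w, Z_{1:t} = zs)`. -/
noncomputable def probWZ (Qf : X → PMF Y) (Qb : Y → PMF Z)
    (G2 : U → (W × U → X) → Z → W → U) (u1 : U) (φ : ℕ → W × U → X)
    (t : ℕ) (w : W) (zs : Fin t → Z) : ℝ≥0∞ :=
  ∑ ys : Fin t → Y, jointP Qf Qb G2 u1 φ t w ys zs

/-- `P(W = w, U_{t+1} = u, Y_{1:t} = ys)` (memory after `t` feedback symbols). -/
noncomputable def probWUY (Qf : X → PMF Y) (Qb : Y → PMF Z)
    (G2 : U → (W × U → X) → Z → W → U) (u1 : U) (φ : ℕ → W × U → X)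
    (t : ℕ) (ys : Fin t → Y) (w : W) (u : U) : ℝ≥0∞ :=
  ∑ zs : Fin t → Z,
    if mem G2 u1 φ w t zs = u then jointP Qf Qb G2 u1 φ t w ys zs else 0


/-- Belief states of the receiver: a belief `π` on the message together with, for each
message `w`, a belief `η w` on the sender's memory. -/
@[reducible] def Belief (W U : Type*) : Type _ := (W → ℝ≥0∞) × (W → U → ℝ≥0∞)

/-- Update map `F¹` of the receiver's belief on the message. -/
noncomputable def F1 (Qf : X → PMF Y) (p : Belief W U) (φ : W × U → X) (y : Y) :
    W → ℝ≥0∞ := fun w =>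
  p.1 w * (∑ u : U, p.2 w u * Qf (φ (w, u)) y) /
    ∑ w' : W, p.1 w' * ∑ u : U, p.2 w' u * Qf (φ (w', u)) y

/-- Update map `F²` of the receiver's conditional belief on the sender's memory. -/
noncomputable def F2 (Qf : X → PMF Y) (Qb : Y → PMF Z)
    (G2 : U → (W × U → X) → Z → W → U) (p : Belief W U) (φ : W × U → X) (y : Y) :
    W → U → ℝ≥0∞ := fun w u' =>
  (∑ u : U, ∑ z : Z,
      p.2 w u * Qf (φ (w, u)) y * Qb y z * (if u' = G2 u φ z w then 1 else 0)) /
    ∑ u : U, p.2 w u * Qf (φ (w, u)) y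

/-- Combined belief update `F = (F¹, F²)`. -/
noncomputable def Fb (Qf : X → PMF Y) (Qb : Y → PMF Z)
    (G2 : U → (W × U → X) → Z → W → U) (p : Belief W U) (φ : W × U → X) (y : Y) :
    Belief W U :=
  (F1 Qf p φ y, F2 Qf Qb G2 p φ y)

/-- Sender belief update `G¹`: update of the sender's belief `σ` over receiver belief
states upon transmitting with encoding function `φ` (with memory `u`, message `w`)
and receiving feedback `z`. -/
noncomputable def G1 (Qf : X → PMF Y) (Qb : Y → PMF Z)
    (G2 : U → (W × U → X) → Z → W → U) (σ : Belief W U → ℝ≥0∞)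
    (φ : W × U → X) (z : Z) (u : U) (w : W) : Belief W U → ℝ≥0∞ := fun b =>
  (∑' p : Belief W U, σ p * ∑ y : Y,
      Qf (φ (w, u)) y * Qb y z * (if b = Fb Qf Qb G2 p φ y then 1 else 0)) /
    ∑ y : Y, Qf (φ (w, u)) y * Qb y z

/-- Initial belief state: uniform on the messages, point mass at `u1` on the memory. -/
noncomputable def b0 [Fintype W] (u1 : U) : Belief W U :=
  (fun _ => (Fintype.card W : ℝ≥0∞)⁻¹, fun _ u => if u = u1 then 1 else 0)

/-- Initial sender belief: point mass at the initial belief state `b0`. -/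
noncomputable def σ0 [Fintype W] (u1 : U) : Belief W U → ℝ≥0∞ := fun b =>
  if b = b0 u1 then 1 else 0

/-- The receiver belief process `(Π_t, H_t)` as a function of the channel outputs,
under the Markov encoders `φ`. -/
noncomputable def beliefs (Qf : X → PMF Y) (Qb : Y → PMF Z)
    (G2 : U → (W × U → X) → Z → W → U) (u1 : U) (φ : ℕ → W × U → X) :
    (t : ℕ) → (Fin t → Y) → Belief W U
  | 0, _ => b0 u1
  | t + 1, ys =>
      Fb Qf Qb G2 (beliefs Qf Qb G2 u1 φ t (Fin.init ys)) (φ t) (ys (Fin.last t))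

/-- Memory evolution under a history-dependent encoder `ψ`:
`U_{t+1} = G²(U_t, φ^{z_{1:t-1}}_t, Z_t, W)` where `φ^{z_{1:t-1}}_t (w', u') = ψ_t (w', z_{1:t-1})`. -/
def memψ (G2 : U → (W × U → X) → Z → W → U) (u1 : U)
    (ψ : (t : ℕ) → W → (Fin t → Z) → X) (w : W) :
    (t : ℕ) → (Fin t → Z) → U
  | 0, _ => u1
  | t + 1, zs =>
      G2 (memψ G2 u1 ψ w t (Fin.init zs))
        (fun p : W × U => ψ t p.1 (Fin.init zs)) (zs (Fin.last t)) w

/-- Joint pmf `P(W = w, Y_{1:t} = ys, Z_{1:t} = zs)` of the channel model with a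
history-dependent deterministic encoder `ψ` (so `X_t = ψ_t (W, Z_{1:t-1})`). -/
noncomputable def jointPψ (Qf : X → PMF Y) (Qb : Y → PMF Z)
    (ψ : (t : ℕ) → W → (Fin t → Z) → X)
    (t : ℕ) (w : W) (ys : Fin t → Y) (zs : Fin t → Z) : ℝ≥0∞ :=
  (Fintype.card W : ℝ≥0∞)⁻¹ *
    ∏ i : Fin t,
      Qf (ψ i w (fun j => zs (Fin.castLE i.2.le j))) (ys i) * Qb (ys i) (zs i)

/-- `P(W = w, Z_{1:t} = zs)` under the encoder `ψ`. -/
noncomputable def probWZψ (Qf : X → PMF Y) (Qb : Y → PMF Z)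
    (ψ : (t : ℕ) → W → (Fin t → Z) → X)
    (t : ℕ) (w : W) (zs : Fin t → Z) : ℝ≥0∞ :=
  ∑ ys : Fin t → Y, jointPψ Qf Qb ψ t w ys zs

/-- `P(W = w, Y_{1:t} = ys)` under the encoder `ψ`. -/
noncomputable def probWYψ (Qf : X → PMF Y) (Qb : Y → PMF Z)
    (ψ : (t : ℕ) → W → (Fin t → Z) → X)
    (t : ℕ) (ys : Fin t → Y) (w : W) : ℝ≥0∞ :=
  ∑ zs : Fin t → Z, jointPψ Qf Qb ψ t w ys zs

/-- The receiver belief process `(Π_t, H_t)` under a history-dependent encoder `ψ`: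
`(Π_0, H_0) = (uniform, point mass at u₁)` and
`(Π_t, H_t) = F(Π_{t-1}, H_{t-1}, φ^{z_{1:t-1}}_t, y_t)`. -/
noncomputable def beliefsψ (Qf : X → PMF Y) (Qb : Y → PMF Z)
    (G2 : U → (W × U → X) → Z → W → U) (u1 : U)
    (ψ : (t : ℕ) → W → (Fin t → Z) → X) :
    (t : ℕ) → (Fin t → Y) → (Fin t → Z) → Belief W U
  | 0, _, _ => b0 u1
  | t + 1, ys, zs =>
      Fb Qf Qb G2 (beliefsψ Qf Qb G2 u1 ψ t (Fin.init ys) (Fin.init zs))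
        (fun p : W × U => ψ t p.1 (Fin.init zs)) (ys (Fin.last t))

/-- Snoc as an equivalence. -/
def snocEquiv' (s : ℕ) (Y : Type*) : ((Fin s → Y) × Y) ≃ (Fin (s + 1) → Y) where
  toFun p := Fin.snoc p.1 p.2
  invFun g := (Fin.init g, g (Fin.last s))
  left_inv p := by simp
  right_inv g := by simp

lemma jointPψ_snoc (Qf : X → PMF Y) (Qb : Y → PMF Z)
    (ψ : (t : ℕ) → W → (Fin t → Z) → X) (s : ℕ) (w : W)
    (ys' : Fin s → Y) (y : Y) (zs : Fin (s + 1) → Z) :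
    jointPψ Qf Qb ψ (s + 1) w (Fin.snoc ys' y) zs =
      jointPψ Qf Qb ψ s w ys' (Fin.init zs) *
        (Qf (ψ s w (Fin.init zs)) y * Qb y (zs (Fin.last s))) := by
  unfold jointPψ
  rw [Fin.prod_univ_castSucc]
  simp only [Fin.snoc_castSucc, Fin.snoc_last]
  rw [← mul_assoc]
  rfl

lemma beliefsψ_snoc (Qf : X → PMF Y) (Qb : Y → PMF Z)
    (G2 : U → (W × U → X) → Z → W → U) (u1 : U)
    (ψ : (t : ℕ) → W → (Fin t → Z) → X) (s : ℕ)
    (ys' : Fin s → Y) (y : Y) (zs : Fin (s + 1) → Z) :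
    beliefsψ Qf Qb G2 u1 ψ (s + 1) (Fin.snoc ys' y) zs =
      Fb Qf Qb G2 (beliefsψ Qf Qb G2 u1 ψ s ys' (Fin.init zs))
        (fun p : W × U => ψ s p.1 (Fin.init zs)) y := by
  rw [beliefsψ, Fin.init_snoc, Fin.snoc_last]

/-- **Lemma 4a of the Appendix** (Statement 11).  Along any positive-probability
feedback history `z_{1:t}` (here `t = s + 1 ≤ n`), the conditional law of the
receiver's belief state `(Π_t, H_t)` given the sender's information
`(W = w, Z_{1:t} = z_{1:t})` is obtained from the previous conditional law `σ_t` by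
the sender's belief-update map: it equals `G¹(σ_t, φ^{z_{1:t-1}}_t, z_t, u_t, w)`,
where `u_t` is the memory determined by `(w, z_{1:t-1})`. -/
theorem sender_belief_consistency
    [Nonempty W] [Nonempty X] [Nonempty Y] [Nonempty Z] [Nonempty U]
    (Qf : X → PMF Y) (Qb : Y → PMF Z)
    (G2 : U → (W × U → X) → Z → W → U) (u1 : U)
    (ψ : (t : ℕ) → W → (Fin t → Z) → X) (n : ℕ)
    (s : ℕ) (hs : s + 1 ≤ n) (w : W) (zs : Fin (s + 1) → Z)
    (hpos : 0 < probWZψ Qf Qb ψ (s + 1) w zs)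
    (b : Belief W U) :
    (∑ ys : Fin (s + 1) → Y,
        if beliefsψ Qf Qb G2 u1 ψ (s + 1) ys zs = b then
          jointPψ Qf Qb ψ (s + 1) w ys zs
        else 0) / probWZψ Qf Qb ψ (s + 1) w zs =
      G1 Qf Qb G2
        (fun b' =>
          (∑ ys : Fin s → Y,
            if beliefsψ Qf Qb G2 u1 ψ s ys (Fin.init zs) = b' then
              jointPψ Qf Qb ψ s w ys (Fin.init zs)
            else 0) / probWZψ Qf Qb ψ s w (Fin.init zs))
        (fun p : W × U => ψ s p.1 (Fin.init zs)) (zs (Fin.last s))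
        (memψ G2 u1 ψ w s (Fin.init zs)) w b := by
  classical
  set φ : W × U → X := fun p : W × U => ψ s p.1 (Fin.init zs) with hφ
  set z : Z := zs (Fin.last s) with hz
  set x : X := ψ s w (Fin.init zs) with hx
  set D : ℝ≥0∞ := probWZψ Qf Qb ψ s w (Fin.init zs) with hD
  set c : ℝ≥0∞ := ∑ y : Y, Qf x y * Qb y z with hc
  have hφwu : ∀ u : U, φ (w, u) = x := fun _ => rfl
  set B : (Fin s → Y) → Belief W U :=
    fun ys' => beliefsψ Qf Qb G2 u1 ψ s ys' (Fin.init zs) with hB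
  set j : (Fin s → Y) → ℝ≥0∞ := fun ys' => jointPψ Qf Qb ψ s w ys' (Fin.init zs)
    with hj
  set N : ℝ≥0∞ := ∑ ys' : Fin s → Y, j ys' *
      ∑ y : Y, Qf x y * Qb y z * (if b = Fb Qf Qb G2 (B ys') φ y then 1 else 0)
    with hN
  -- rewrite a sum over `Fin (s+1) → Y` as a double sum via `snoc`
  have hsum : ∀ f : (Fin (s + 1) → Y) → ℝ≥0∞,
      ∑ ys : Fin (s + 1) → Y, f ys =
        ∑ ys' : Fin s → Y, ∑ y : Y, f (Fin.snoc ys' y) := by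
    intro f
    rw [← Fintype.sum_equiv (snocEquiv' s Y) (fun p => f (Fin.snoc p.1 p.2)) f
      (fun p => rfl), Fintype.sum_prod_type]
  -- the LHS numerator equals N
  have hnum : (∑ ys : Fin (s + 1) → Y,
      if beliefsψ Qf Qb G2 u1 ψ (s + 1) ys zs = b then
        jointPψ Qf Qb ψ (s + 1) w ys zs else 0) = N := by
    rw [hsum]
    apply Finset.sum_congr rfl
    intro ys' _
    rw [Finset.mul_sum]
    apply Finset.sum_congr rfl
    intro y _
    rw [jointPψ_snoc, beliefsψ_snoc]
    change (if Fb Qf Qb G2 (B ys') φ y = b then j ys' * (Qf x y * Qb y z) else 0) =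
      j ys' * (Qf x y * Qb y z * (if b = Fb Qf Qb G2 (B ys') φ y then 1 else 0))
    by_cases h : Fb Qf Qb G2 (B ys') φ y = b
    · simp [h]
    · simp [h, Ne.symm h]
  -- the LHS denominator factorizes
  have hden : probWZψ Qf Qb ψ (s + 1) w zs = D * c := by
    unfold probWZψ
    rw [hsum]
    rw [hD]
    unfold probWZψ
    rw [Finset.sum_mul]
    apply Finset.sum_congr rfl
    intro ys' _
    rw [hc, Finset.mul_sum]
    apply Finset.sum_congr rfl
    intro y _
    rw [jointPψ_snoc]
  have hDc : 0 < D * c := hden ▸ hpos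
  have hD0 : D ≠ 0 := by
    intro h; rw [h, zero_mul] at hDc; exact lt_irrefl _ hDc
  have hc0 : c ≠ 0 := by
    intro h; rw [h, mul_zero] at hDc; exact lt_irrefl _ hDc
  -- compute the tsum in G1
  have htsum : (∑' p : Belief W U,
      (∑ ys' : Fin s → Y, if B ys' = p then j ys' else 0) / D *
        ∑ y : Y, Qf (φ (w, memψ G2 u1 ψ w s (Fin.init zs))) y * Qb y z *
          (if b = Fb Qf Qb G2 p φ y then 1 else 0)) = N * D⁻¹ := by
    have : ∀ p : Belief W U,
        (∑ ys' : Fin s → Y, if B ys' = p then j ys' else 0) / D *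
          ∑ y : Y, Qf (φ (w, memψ G2 u1 ψ w s (Fin.init zs))) y * Qb y z *
            (if b = Fb Qf Qb G2 p φ y then 1 else 0) =
        ∑ ys' : Fin s → Y, (if B ys' = p then
          j ys' * (∑ y : Y, Qf x y * Qb y z *
            (if b = Fb Qf Qb G2 (B ys') φ y then 1 else 0)) * D⁻¹ else 0) := by
      intro p
      rw [div_eq_mul_inv, Finset.sum_mul, Finset.sum_mul]
      apply Finset.sum_congr rfl
      intro ys' _
      by_cases h : B ys' = p
      · simp only [h, if_true, hφwu]
        ring
      · simp [h]
    simp only [this]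
    rw [Summable.tsum_finsetSum (fun ys' _ => ENNReal.summable)]
    rw [hN, Finset.sum_mul]
    apply Finset.sum_congr rfl
    intro ys' _
    rw [tsum_eq_single (B ys') (fun p hp => if_neg (Ne.symm hp))]
    exact if_pos rfl
  -- put everything together
  rw [hnum, hden]
  unfold G1
  simp only [hφwu]
  rw [htsum]
  rw [div_eq_mul_inv, div_eq_mul_inv, ENNReal.mul_inv (Or.inl hD0) (Or.inr hc0)]
  ring

end NoisyFeedback
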